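/- arXiv:1503.00169 — 2 statements merged into one kernel-verified Lean document; each statement's English description precedes it below -/
import Mathlib

section
/- Let V be a finite-dimensional vector space with a decomposition V = ⊕_{i=1}^m V_i that is distributive with respect to subspaces E and F. Then the decomposition is distributive with respect to E ∩ F and with respect to E + F, and (E + F) ∩ V_i = (E ∩ V_i) + (F ∩ V_i) for each i. -/
open Finset in
private lemma mem_iSup_fin {K V : Type*} [Field K] [AddCommGroup V] [Module K V]
    {m : ℕ} {P : Fin m → Submodule K V} {x : V} :
    x ∈ (⨆ i, P i) ↔ ∃ f : Fin m → V, (∀ i, f i ∈ P i) ∧ ∑ i, f i = x := by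
  rw [Submodule.mem_iSup_iff_exists_finsupp]
  constructor
  · rintro ⟨f, hf, rfl⟩
    exact ⟨fun i => f i, hf, by rw [Finsupp.sum_fintype]; simp⟩
  · rintro ⟨f, hf, rfl⟩
    refine ⟨Finsupp.equivFunOnFinite.symm f, fun i => hf i, ?_⟩
    rw [Finsupp.sum_fintype] <;> simp

private lemma sum_eq_zero_of_indep {K V : Type*} [Field K] [AddCommGroup V] [Module K V]
    {m : ℕ} {Vsub : Fin m → Submodule K V} (hindep : iSupIndep Vsub)
    {f : Fin m → V} (hf : ∀ i, f i ∈ Vsub i) (h : ∑ i, f i = 0) : ∀ i, f i = 0 := by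
  classical
  have hinj := hindep.dfinsupp_lsum_injective
  set d : Π₀ i, Vsub i := DFinsupp.mk Finset.univ (fun i => ⟨f i.1, hf i.1⟩) with hd
  have hdi : ∀ i, (d i : V) = f i := by
    intro i; simp [hd, DFinsupp.mk_apply]
  have : DFinsupp.lsum ℕ (fun i => (Vsub i).subtype) d = 0 := by
    rw [DFinsupp.lsum_apply_apply, DFinsupp.sumAddHom_apply, ← h]
    rw [show (∑ i, f i) = ∑ i ∈ d.support, (d i : V) from ?_]
    · rfl
    · rw [Finset.sum_subset (Finset.subset_univ d.support)]
      · exact Finset.sum_congr rfl fun i _ => (hdi i).symm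
      · intro i _ hi
        rw [DFinsupp.notMem_support_iff.mp hi]; rfl
  have hd0 : d = 0 := hinj (by simpa using this)
  intro i
  rw [← hdi i, hd0]; rfl

private lemma sum_unique {K V : Type*} [Field K] [AddCommGroup V] [Module K V]
    {m : ℕ} {Vsub : Fin m → Submodule K V} (hindep : iSupIndep Vsub)
    {f g : Fin m → V} (hf : ∀ i, f i ∈ Vsub i) (hg : ∀ i, g i ∈ Vsub i)
    (h : ∑ i, f i = ∑ i, g i) : ∀ i, f i = g i := by
  have := sum_eq_zero_of_indep hindep (f := f - g)
    (fun i => sub_mem (hf i) (hg i)) (by simp [Finset.sum_sub_distrib, h])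
  intro i
  have := this i
  simpa [sub_eq_zero] using this

/-- Lemma 3 (i): a decomposition distributive w.r.t. `E` and `F` is distributive
w.r.t. `E ∩ F` and `E + F`, and `(E + F) ∩ V_i = (E ∩ V_i) + (F ∩ V_i)`. -/
theorem distributive_inf_sup {K V : Type*} [Field K] [AddCommGroup V] [Module K V]
    [FiniteDimensional K V] (m : ℕ) (Vsub : Fin m → Submodule K V)
    (hindep : iSupIndep Vsub) (hsup : (⨆ i, Vsub i) = ⊤)
    (E F : Submodule K V) (hE : E = ⨆ i, E ⊓ Vsub i) (hF : F = ⨆ i, F ⊓ Vsub i) :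
    (E ⊓ F = ⨆ i, (E ⊓ F) ⊓ Vsub i) ∧ (E ⊔ F = ⨆ i, (E ⊔ F) ⊓ Vsub i) ∧
      ∀ i, (E ⊔ F) ⊓ Vsub i = (E ⊓ Vsub i) ⊔ (F ⊓ Vsub i) := by
  classical
  have part3 : ∀ i, (E ⊔ F) ⊓ Vsub i = (E ⊓ Vsub i) ⊔ (F ⊓ Vsub i) := by
    intro i
    refine le_antisymm ?_ (sup_le (inf_le_inf_right _ le_sup_left)
      (inf_le_inf_right _ le_sup_right))
    rintro x ⟨hxEF, hxVi⟩
    obtain ⟨e, he, f, hf, rfl⟩ := Submodule.mem_sup.mp hxEF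
    obtain ⟨es, hes, hesum⟩ := mem_iSup_fin.mp (hE ▸ he)
    obtain ⟨fs, hfs, hfsum⟩ := mem_iSup_fin.mp (hF ▸ hf)
    have huniq := sum_unique hindep (f := fun j => es j + fs j)
      (g := fun j => if j = i then e + f else 0)
      (fun j => add_mem (hes j).2 (hfs j).2)
      (fun j => by
        by_cases h : j = i
        · subst h; simpa using hxVi
        · simp [h])
      (by simp [Finset.sum_add_distrib, hesum, hfsum])
    have hxi : e + f = es i + fs i := by
      have h := huniq i; simp only [if_pos rfl] at h; exact h.symm
    rw [hxi]
    exact Submodule.add_mem_sup ⟨(hes i).1, (hes i).2⟩ ⟨(hfs i).1, (hfs i).2⟩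
  refine ⟨?_, ?_, part3⟩
  · refine le_antisymm ?_ (iSup_le fun i => inf_le_left)
    rintro x ⟨hxE, hxF⟩
    obtain ⟨es, hes, hesum⟩ := mem_iSup_fin.mp (hE ▸ hxE)
    obtain ⟨fs, hfs, hfsum⟩ := mem_iSup_fin.mp (hF ▸ hxF)
    have huniq := sum_unique hindep (fun j => (hes j).2) (fun j => (hfs j).2)
      (by rw [hesum, hfsum])
    refine mem_iSup_fin.mpr ⟨es, fun j => ⟨⟨(hes j).1, huniq j ▸ (hfs j).1⟩, (hes j).2⟩, hesum⟩
  · have : (⨆ i, (E ⊔ F) ⊓ Vsub i) = ⨆ i, (E ⊓ Vsub i) ⊔ (F ⊓ Vsub i) := by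
      exact iSup_congr part3
    rw [this, iSup_sup_eq, ← hE, ← hF]
end

section
/- The isotropic pair A = ⟨e₁⟩, B = ⟨e₁ + e₃⟩ in ℝ³ with the standard presymplectic structure of rank 2 is indecomposable: for any orthogonal decomposition ℝ³ = V₁ ⊕ V₂ with A = (A∩V₁) ⊕ (A∩V₂) and B = (B∩V₁) ⊕ (B∩V₂), either V₁ = 0 or V₂ = 0. -/
/-- The standard presymplectic structure of rank 2 on `ℝ³`. -/
noncomputable def stdForm (x y : Fin 3 → ℝ) : ℝ := x 0 * y 1 - x 1 * y 0

lemma span_split (x : Fin 3 → ℝ) (V₁ V₂ : Submodule ℝ (Fin 3 → ℝ))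
    (h : Submodule.span ℝ {x} = (Submodule.span ℝ {x} ⊓ V₁) ⊔ (Submodule.span ℝ {x} ⊓ V₂)) :
    x ∈ V₁ ∨ x ∈ V₂ := by
  have hx : x ∈ Submodule.span ℝ {x} := Submodule.mem_span_singleton_self x
  rw [h] at hx
  obtain ⟨y, hy, z, hz, hyz⟩ := Submodule.mem_sup.mp hx
  obtain ⟨a, rfl⟩ := Submodule.mem_span_singleton.mp hy.1
  rcases eq_or_ne a 0 with ha | ha
  · right
    have hzx : z = x := by rw [← hyz, ha, zero_smul, zero_add]
    exact hzx ▸ hz.2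
  · left
    have hx' : x = a⁻¹ • (a • x) := by rw [smul_smul, inv_mul_cancel₀ ha, one_smul]
    exact hx' ▸ V₁.smul_mem a⁻¹ hy.2

lemma same_side (V₁ V₂ : Submodule ℝ (Fin 3 → ℝ)) (hdisj : Disjoint V₁ V₂)
    (horth : ∀ v ∈ V₁, ∀ w ∈ V₂, stdForm v w = 0)
    (h1 : ![(1:ℝ), 0, 0] ∈ V₁) (h2 : ![(1:ℝ), 0, 1] ∈ V₁) : V₂ = ⊥ := by
  rw [Submodule.eq_bot_iff]
  intro v hv
  have hv1 : v 1 = 0 := by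
    have := horth _ h1 v hv
    simpa [stdForm] using this
  have hrep : v = (v 0 - v 2) • ![(1:ℝ), 0, 0] + (v 2) • ![(1:ℝ), 0, 1] := by
    funext i
    fin_cases i <;> simp [hv1]
  have hvV1 : v ∈ V₁ := by
    rw [hrep]
    exact V₁.add_mem (V₁.smul_mem _ h1) (V₁.smul_mem _ h2)
  exact (Submodule.mem_bot ℝ).mp (hdisj.le_bot ⟨hvV1, hv⟩)

/-- The isotropic pair `(⟨e₁⟩, ⟨e₁ + e₃⟩)` in `ℝ³` with the standard presymplectic
structure of rank 2 is indecomposable. -/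
theorem type_five_indecomposable
    (A B : Submodule ℝ (Fin 3 → ℝ))
    (hA : A = Submodule.span ℝ {![(1:ℝ), 0, 0]})
    (hB : B = Submodule.span ℝ {![(1:ℝ), 0, 1]})
    (V₁ V₂ : Submodule ℝ (Fin 3 → ℝ))
    (hdisj : Disjoint V₁ V₂) (hsup : V₁ ⊔ V₂ = ⊤)
    (horth : ∀ v ∈ V₁, ∀ w ∈ V₂, stdForm v w = 0)
    (hAdist : A = (A ⊓ V₁) ⊔ (A ⊓ V₂))
    (hBdist : B = (B ⊓ V₁) ⊔ (B ⊓ V₂)) :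
    V₁ = ⊥ ∨ V₂ = ⊥ := by
  subst hA hB
  have hAsplit := span_split _ V₁ V₂ hAdist
  have hBsplit := span_split _ V₁ V₂ hBdist
  -- decompose e₂
  have he2 : (![(0:ℝ), 1, 0]) ∈ V₁ ⊔ V₂ := by rw [hsup]; trivial
  obtain ⟨w₁, hw₁, w₂, hw₂, hw⟩ := Submodule.mem_sup.mp he2
  have hw1' : w₁ 1 + w₂ 1 = 1 := by
    have : (w₁ + w₂) 1 = (![(0:ℝ), 1, 0]) 1 := by rw [hw]
    simpa using this
  rcases hAsplit with hA1 | hA2 <;> rcases hBsplit with hB1 | hB2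
  · exact Or.inr (same_side V₁ V₂ hdisj horth hA1 hB1)
  · -- e₁ ∈ V₁, e₁+e₃ ∈ V₂ : contradiction
    exfalso
    have c1 : w₂ 1 = 0 := by
      have := horth _ hA1 w₂ hw₂
      simpa [stdForm] using this
    have c2 : w₁ 1 = 0 := by
      have := horth w₁ hw₁ _ hB2
      simp [stdForm] at this
      linarith
    rw [c1, c2] at hw1'; norm_num at hw1'
  · exfalso
    have c1 : w₂ 1 = 0 := by
      have := horth _ hB1 w₂ hw₂
      simpa [stdForm] using this
    have c2 : w₁ 1 = 0 := by
      have := horth w₁ hw₁ _ hA2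
      simp [stdForm] at this
      linarith
    rw [c1, c2] at hw1'; norm_num at hw1'
  · refine Or.inl (same_side V₂ V₁ hdisj.symm ?_ hA2 hB2)
    intro v hv w hw
    have := horth w hw v hv
    simp [stdForm] at this ⊢
    linarith
end
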